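/- Let r > 0, μ > 0, X = r/μ, τ > 0, λ ∈ (0,1), and assume R₀ := r·τ / ln(1/(1−λ)) > 1. Then the function G̃_e(t) = X·((1−λ)·e^{r·τ} − 1)·e^{r·t} / ( ((1−λ)·e^{r·τ} − 1)·e^{r·t} + λ·e^{r·τ} ) is strictly positive on [0, τ], satisfies the logistic equation G̃_e'(t) = r·G̃_e(t) − μ·G̃_e(t)² for all t ∈ [0, τ], and satisfies the pulse (τ-periodicity) condition G̃_e(0) = (1−λ)·G̃_e(τ). Hence the impulsive grass-only system admits a positive τ-periodic grassland solution. -/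

import Mathlib

/-- When `R₀ > 1`, the impulsive grass-only system admits a positive
τ-periodic grassland solution, given explicitly by `G̃_e`. -/
theorem periodic_grassland_solution
    (r μ X τ lam : ℝ) (hr : 0 < r) (hμ : 0 < μ) (hX : X = r / μ)
    (hτ : 0 < τ) (hlam : lam ∈ Set.Ioo (0:ℝ) 1)
    (hR₀ : 1 < r * τ / Real.log (1 / (1 - lam)))
    (Ge : ℝ → ℝ)
    (hGe : Ge = fun t => X * ((1 - lam) * Real.exp (r * τ) - 1) * Real.exp (r * t) /
      (((1 - lam) * Real.exp (r * τ) - 1) * Real.exp (r * t) + lam * Real.exp (r * τ))) :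
    (∀ t ∈ Set.Icc (0:ℝ) τ, 0 < Ge t) ∧
    (∀ t ∈ Set.Icc (0:ℝ) τ, HasDerivAt Ge (r * Ge t - μ * (Ge t) ^ 2) t) ∧
    Ge 0 = (1 - lam) * Ge τ := by
  obtain ⟨hl0, hl1⟩ := hlam
  have h1l : 0 < 1 - lam := by linarith
  have hEpos : 0 < Real.exp (r * τ) := Real.exp_pos _
  have hlog : 0 < Real.log (1 / (1 - lam)) := by
    apply Real.log_pos
    rw [lt_div_iff₀ h1l]; linarith
  have hrτ : Real.log (1 / (1 - lam)) < r * τ := by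
    rw [lt_div_iff₀ hlog] at hR₀; linarith
  have hA : 0 < (1 - lam) * Real.exp (r * τ) - 1 := by
    have h2 : 1 / (1 - lam) < Real.exp (r * τ) := by
      calc 1 / (1 - lam) = Real.exp (Real.log (1 / (1 - lam))) :=
            (Real.exp_log (by positivity)).symm
        _ < Real.exp (r * τ) := Real.exp_lt_exp.mpr hrτ
    rw [div_lt_iff₀ h1l] at h2
    nlinarith
  have hXpos : 0 < X := by rw [hX]; positivity
  have hD : ∀ t : ℝ, 0 < ((1 - lam) * Real.exp (r * τ) - 1) * Real.exp (r * t)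
      + lam * Real.exp (r * τ) := by
    intro t
    have := Real.exp_pos (r * t)
    positivity
  refine ⟨?_, ?_, ?_⟩
  · intro t _
    rw [hGe]
    have := Real.exp_pos (r * t)
    exact div_pos (by positivity) (hD t)
  · intro t _
    have hexp : HasDerivAt (fun s : ℝ => Real.exp (r * s))
        (Real.exp (r * t) * (r * 1)) t := ((hasDerivAt_id t).const_mul r).exp
    have hN : HasDerivAt (fun s : ℝ => X * ((1 - lam) * Real.exp (r * τ) - 1) * Real.exp (r * s))
        ((X * ((1 - lam) * Real.exp (r * τ) - 1)) * (Real.exp (r * t) * (r * 1))) t :=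
      hexp.const_mul _
    have hDd : HasDerivAt (fun s : ℝ => ((1 - lam) * Real.exp (r * τ) - 1) * Real.exp (r * s)
        + lam * Real.exp (r * τ))
        ((((1 - lam) * Real.exp (r * τ) - 1)) * (Real.exp (r * t) * (r * 1))) t :=
      (hexp.const_mul _).add_const _
    have hq := hN.div hDd (ne_of_gt (hD t))
    rw [hGe]
    refine HasDerivAt.congr_deriv hq ?_
    have hDne := ne_of_gt (hD t)
    have hμne := ne_of_gt hμ
    beta_reduce
    rw [hX]
    field_simp [hX]
  · rw [hGe]
    simp only [mul_zero, Real.exp_zero, mul_one]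
    have hDne0 : ((1 - lam) * Real.exp (r * τ) - 1) + lam * Real.exp (r * τ) ≠ 0 := by
      have := hD 0
      simpa using ne_of_gt this
    have hDneτ : ((1 - lam) * Real.exp (r * τ) - 1) * Real.exp (r * τ)
        + lam * Real.exp (r * τ) ≠ 0 := ne_of_gt (hD τ)
    field_simp
    ring
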